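/- Let λ₁, λ₂ : G → ℤ/4ℤ be surjective group homomorphisms whose restrictions to each finite cyclic subgroup ⟨b_j⟩, ⟨d_k⟩, ⟨e_l⟩, ⟨g_q⟩ are injective. Suppose there is an index j with λ₁(f_j) a generator of ℤ/4ℤ (i.e. equal to 1 or 3), while λ₂(f_i) is not a generator of ℤ/4ℤ for every index i. Then for every admissible automorphism α of G, λ₂∘α ≠ λ₁. -/

import Mathlib

open Monoid

/-- Index type for the factors of the free product `G(r,s,t,m,n)`. -/
abbrev Idx (r s t m n : ℕ) := Fin r ⊕ Fin s ⊕ Fin t ⊕ Fin m ⊕ Fin n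

/-- The factors: `r` copies of `ℤ`, `s` copies of `ℤ/4 × ℤ`, `t` copies of `ℤ/4`,
`m` copies of `ℤ/2 × ℤ`, and `n` copies of `ℤ/2` (written multiplicatively). -/
def Fac (r s t m n : ℕ) : Idx r s t m n → Type
  | .inl _ => Multiplicative ℤ
  | .inr (.inl _) => Multiplicative (ZMod 4 × ℤ)
  | .inr (.inr (.inl _)) => Multiplicative (ZMod 4)
  | .inr (.inr (.inr (.inl _))) => Multiplicative (ZMod 2 × ℤ)
  | .inr (.inr (.inr (.inr _))) => Multiplicative (ZMod 2)

instance (r s t m n : ℕ) : (i : Idx r s t m n) → Group (Fac r s t m n i)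
  | .inl _ => inferInstanceAs (Group (Multiplicative ℤ))
  | .inr (.inl _) => inferInstanceAs (Group (Multiplicative (ZMod 4 × ℤ)))
  | .inr (.inr (.inl _)) => inferInstanceAs (Group (Multiplicative (ZMod 4)))
  | .inr (.inr (.inr (.inl _))) => inferInstanceAs (Group (Multiplicative (ZMod 2 × ℤ)))
  | .inr (.inr (.inr (.inr _))) => inferInstanceAs (Group (Multiplicative (ZMod 2)))

/-- The group `G(r,s,t,m,n)`, the free product of the factors above; this is the orbifold
fundamental group `π₁^orb(V(Γ(v),G(v)))`. -/
abbrev OrbGroup (r s t m n : ℕ) := Monoid.CoprodI (Fac r s t m n)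

variable {r s t m n : ℕ}

/-- The free generator `a_i` of the `i`-th `ℤ` factor. -/
def genA (i : Fin r) : OrbGroup r s t m n :=
  CoprodI.of (show Fac r s t m n (.inl i) from Multiplicative.ofAdd (1 : ℤ))

/-- The order-4 generator `b_j` of the `j`-th `ℤ/4 × ℤ` factor. -/
def genB (j : Fin s) : OrbGroup r s t m n :=
  CoprodI.of (show Fac r s t m n (.inr (.inl j)) from
    Multiplicative.ofAdd ((1, 0) : ZMod 4 × ℤ))

/-- The infinite-order generator `c_j` of the `j`-th `ℤ/4 × ℤ` factor. -/
def genC (j : Fin s) : OrbGroup r s t m n :=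
  CoprodI.of (show Fac r s t m n (.inr (.inl j)) from
    Multiplicative.ofAdd ((0, 1) : ZMod 4 × ℤ))

/-- The order-4 generator `d_k` of the `k`-th `ℤ/4` factor. -/
def genD (k : Fin t) : OrbGroup r s t m n :=
  CoprodI.of (show Fac r s t m n (.inr (.inr (.inl k))) from
    Multiplicative.ofAdd (1 : ZMod 4))

/-- The order-2 generator `e_l` of the `l`-th `ℤ/2 × ℤ` factor. -/
def genE (l : Fin m) : OrbGroup r s t m n :=
  CoprodI.of (show Fac r s t m n (.inr (.inr (.inr (.inl l)))) from
    Multiplicative.ofAdd ((1, 0) : ZMod 2 × ℤ))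

/-- The infinite-order generator `f_l` of the `l`-th `ℤ/2 × ℤ` factor. -/
def genF (l : Fin m) : OrbGroup r s t m n :=
  CoprodI.of (show Fac r s t m n (.inr (.inr (.inr (.inl l)))) from
    Multiplicative.ofAdd ((0, 1) : ZMod 2 × ℤ))

/-- The order-2 generator `g_q` of the `q`-th `ℤ/2` factor. -/
def genG (q : Fin n) : OrbGroup r s t m n :=
  CoprodI.of (show Fac r s t m n (.inr (.inr (.inr (.inr q)))) from
    Multiplicative.ofAdd (1 : ZMod 2))

/-- An automorphism of `G(r,s,t,m,n)` is admissible (the algebraic characterization of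
realizable automorphisms from Lemma 2.2) if it sends each torsion-related generator to a
conjugate of the appropriate normal form. -/
def Admissible (α : OrbGroup r s t m n ≃* OrbGroup r s t m n) : Prop :=
  ∃ (σ : Equiv.Perm (Fin s)) (τ : Equiv.Perm (Fin t)) (γ : Equiv.Perm (Fin m))
    (ξ : Equiv.Perm (Fin n))
    (x : Fin s → OrbGroup r s t m n) (y : Fin t → OrbGroup r s t m n)
    (u : Fin m → OrbGroup r s t m n) (z : Fin n → OrbGroup r s t m n)
    (ε : Fin s → ℤ) (δ : Fin t → ℤ) (ε' : Fin m → ℤ) (δ' : Fin n → ℤ)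
    (v : Fin s → ℕ) (w : Fin m → ℕ),
    (∀ j, ε j = 1 ∨ ε j = -1) ∧ (∀ k, δ k = 1 ∨ δ k = -1) ∧
    (∀ l, ε' l = 1 ∨ ε' l = -1) ∧ (∀ q, δ' q = 1 ∨ δ' q = -1) ∧
    (∀ j, v j < 4) ∧ (∀ l, w l < 2) ∧
    (∀ j, α (genB j) = x j * genB (σ j) ^ ε j * (x j)⁻¹) ∧
    (∀ j, α (genC j) = x j * genB (σ j) ^ v j * genC (σ j) ^ ε j * (x j)⁻¹) ∧
    (∀ k, α (genD k) = y k * genD (τ k) ^ δ k * (y k)⁻¹) ∧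
    (∀ l, α (genE l) = u l * genE (γ l) ^ ε' l * (u l)⁻¹) ∧
    (∀ l, α (genF l) = u l * genE (γ l) ^ w l * genF (γ l) ^ ε' l * (u l)⁻¹) ∧
    (∀ q, α (genG q) = z q * genG (ξ q) ^ δ' q * (z q)⁻¹)

/-- `λ` is "finite injective": its restriction to each finite cyclic subgroup
`⟨b_j⟩`, `⟨d_k⟩`, `⟨e_l⟩`, `⟨g_q⟩` is injective. -/
def InjOnTorsion {r s t m n : ℕ}
    (lam : OrbGroup r s t m n →* Multiplicative (ZMod 4)) : Prop :=
  (∀ j : Fin s, Set.InjOn lam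
    ((Subgroup.zpowers (genB j) : Subgroup (OrbGroup r s t m n)) : Set (OrbGroup r s t m n))) ∧
  (∀ k : Fin t, Set.InjOn lam
    ((Subgroup.zpowers (genD k) : Subgroup (OrbGroup r s t m n)) : Set (OrbGroup r s t m n))) ∧
  (∀ l : Fin m, Set.InjOn lam
    ((Subgroup.zpowers (genE l) : Subgroup (OrbGroup r s t m n)) : Set (OrbGroup r s t m n))) ∧
  (∀ q : Fin n, Set.InjOn lam
    ((Subgroup.zpowers (genG q) : Subgroup (OrbGroup r s t m n)) : Set (OrbGroup r s t m n)))

/-- Algebraic form of Lemma 2.3: if `λ₁` sends some `f_j` to a generator of `ℤ/4` while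
`λ₂` sends no `f_i` to a generator, then no admissible automorphism `α` satisfies
`λ₂ ∘ α = λ₁`; i.e. the two finite injective epimorphisms are not equivalent. -/
theorem not_equivalent_of_f_generator {r s t m n : ℕ} (hm : 0 < m)
    (lam1 lam2 : OrbGroup r s t m n →* Multiplicative (ZMod 4))
    (hsurj1 : Function.Surjective lam1) (hsurj2 : Function.Surjective lam2)
    (hinj1 : InjOnTorsion lam1) (hinj2 : InjOnTorsion lam2)
    (h1 : ∃ j : Fin m, lam1 (genF j) = Multiplicative.ofAdd (1 : ZMod 4) ∨
      lam1 (genF j) = Multiplicative.ofAdd (3 : ZMod 4))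
    (h2 : ∀ i : Fin m, ¬(lam2 (genF i) = Multiplicative.ofAdd (1 : ZMod 4) ∨
      lam2 (genF i) = Multiplicative.ofAdd (3 : ZMod 4))) :
    ∀ α : OrbGroup r s t m n ≃* OrbGroup r s t m n, Admissible α →
      lam2.comp α.toMonoidHom ≠ lam1 := by
  intro α hadm heq
  obtain ⟨j, hj⟩ := h1
  obtain ⟨σ, τ, γ, ξ, x, y, u, z, ε, δ, ε', δ', v, w, hε1, hδ1, hε'1, hδ'1,
    hv, hw, hB, hC, hD, hE, hF, hG⟩ := hadm
  -- genE squares to 1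
  have hEsq : genE (r := r) (s := s) (t := t) (n := n) (γ j) ^ 2 = 1 := by
    rw [genE, ← map_pow]
    have key : (show Fac r s t m n (.inr (.inr (.inr (.inl (γ j))))) from
        Multiplicative.ofAdd ((1, 0) : ZMod 2 × ℤ)) ^ 2 = 1 := by
      show (Multiplicative.ofAdd ((1, 0) : ZMod 2 × ℤ)) ^ 2 = 1
      change (Multiplicative.ofAdd ((1, 0) : ZMod 2 × ℤ)) * (Multiplicative.ofAdd ((1, 0) : ZMod 2 × ℤ)) = 1
      rw [← ofAdd_add]
      have : ((1, 0) : ZMod 2 × ℤ) + (1, 0) = 0 := by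
        ext
        · decide
        · simp
      rw [this]
      rfl
    rw [key, map_one]
  have heq' : lam1 (genF j) = lam2 (α (genF j)) := by
    rw [← heq]; rfl
  have hval : lam1 (genF j)
      = lam2 (genE (γ j)) ^ (w j) * lam2 (genF (γ j)) ^ (ε' j) := by
    rw [heq', hF j, map_mul, map_mul, map_mul, map_inv, map_pow, map_zpow,
      mul_assoc (lam2 (u j)), mul_inv_cancel_comm]
  set a : ZMod 4 := Multiplicative.toAdd (lam2 (genE (γ j))) with ha0
  set b : ZMod 4 := Multiplicative.toAdd (lam2 (genF (γ j))) with hb0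
  have haa : a + a = 0 := by
    have h1' : lam2 (genE (γ j)) ^ 2 = 1 := by rw [← map_pow, hEsq, map_one]
    have := congrArg Multiplicative.toAdd h1'
    simpa [pow_two] using this
  have ha : a = 0 ∨ a = 2 := by
    have : ∀ c : ZMod 4, c + c = 0 → c = 0 ∨ c = 2 := by decide
    exact this a haa
  have hb : b = 0 ∨ b = 2 := by
    have hne := h2 (γ j)
    push_neg at hne
    have hb1 : b ≠ 1 := by
      intro h
      exact hne.1 (by rw [← ofAdd_toAdd (lam2 (genF (γ j))), ← hb0, h])
    have hb3 : b ≠ 3 := by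
      intro h
      exact hne.2 (by rw [← ofAdd_toAdd (lam2 (genF (γ j))), ← hb0, h])
    have : ∀ c : ZMod 4, c ≠ 1 → c ≠ 3 → c = 0 ∨ c = 2 := by decide
    exact this b hb1 hb3
  have hvadd : Multiplicative.toAdd (lam1 (genF j)) = (w j) • a + (ε' j) • b := by
    have := congrArg Multiplicative.toAdd hval
    simpa using this
  have hjadd : Multiplicative.toAdd (lam1 (genF j)) = 1 ∨
      Multiplicative.toAdd (lam1 (genF j)) = 3 := by
    rcases hj with h | h <;> [left; right] <;> rw [h] <;> rfl
  have hw2 : w j = 0 ∨ w j = 1 := by have := hw j; omega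
  rcases hε'1 j with he | he <;> rcases hw2 with hww | hww <;>
    rw [he, hww] at hvadd <;> rcases ha with ha | ha <;> rcases hb with hb | hb <;>
    rw [ha, hb] at hvadd <;>
    simp only [zero_smul, one_smul, neg_smul, one_zsmul, zero_zsmul, smul_zero] at hvadd <;>
    rw [hvadd] at hjadd <;> revert hjadd <;> decide
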